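/- arXiv:1507.07095 — 4 statements merged into one kernel-verified Lean document; each statement's English description precedes it below -/
import Mathlib

section
/- Let H be a separable real Hilbert space, let θ ∈ (0,∞), let B : H → H be θ-cocoercive, let γ ∈ (0,2θ), let τ ∈ [0,∞), and let z ∈ H. Let (Ω,F,P) be a probability space, let X be a sub-σ-algebra of F, let x be an X-measurable random variable in L²(Ω,F,P;H), let u ∈ L²(Ω,F,P;H), and let ζ be a [0,∞)-valued X-measurable random variable such that E[‖u − E[u|X]‖² | X] ≤ τ‖Bx − Bz‖² + ζ P-a.s. Set ũ = u − E[u|X] + Bx. Then E[‖x − z − γ(ũ − Bz)‖² | X] ≤ ‖x − z‖² − γ(2θ − (1+τ)γ)‖Bx − Bz‖² + γ²ζ P-almost surely. -/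
set_option maxHeartbeats 1000000


open MeasureTheory Filter
open scoped RealInnerProductSpace Topology

/-- **Conditional descent inequality for the stochastic forward step.**
With a cocoercive operator B, a conditional variance bound on the stochastic
approximation u, and the recentered approximation
utilde = u − E[u|X] + B x, one has a.s.
E[ ‖x − z − γ(utilde − Bz)‖² | X ]
  ≤ ‖x − z‖² − γ(2θ − (1+τ)γ)‖Bx − Bz‖² + γ²ζ. -/
theorem stochastic_forward_step_descent
    {Ω : Type*} {m0 : MeasurableSpace Ω} {P : Measure Ω} [IsProbabilityMeasure P]
    {H : Type*} [NormedAddCommGroup H] [InnerProductSpace ℝ H] [CompleteSpace H]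
    [SecondCountableTopology H] [MeasurableSpace H] [BorelSpace H]
    (θ : ℝ) (hθ : 0 < θ)
    (B : H → H) (hB : ∀ x y : H, θ * ‖B x - B y‖ ^ 2 ≤ ⟪x - y, B x - B y⟫)
    (γ : ℝ) (hγ : γ ∈ Set.Ioo 0 (2 * θ)) (τ : ℝ) (hτ : 0 ≤ τ) (z : H)
    (m : MeasurableSpace Ω) (hm : m ≤ m0)
    (x : Ω → H) (hx_meas : Measurable[m] x) (hxL2 : MemLp x 2 P)
    (u : Ω → H) (huL2 : MemLp u 2 P)
    (ζ : Ω → ℝ) (hζ_meas : Measurable[m] ζ) (hζ_nonneg : ∀ ω, 0 ≤ ζ ω)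
    (hvar : ∀ᵐ ω ∂P,
      (P[fun ω' => ‖u ω' - (P[u | m]) ω'‖ ^ 2 | m]) ω
        ≤ τ * ‖B (x ω) - B z‖ ^ 2 + ζ ω) :
    ∀ᵐ ω ∂P,
      (P[fun ω' =>
          ‖x ω' - z - γ • ((u ω' - (P[u | m]) ω' + B (x ω')) - B z)‖ ^ 2 | m]) ω
        ≤ ‖x ω - z‖ ^ 2 - γ * (2 * θ - (1 + τ) * γ) * ‖B (x ω) - B z‖ ^ 2
          + γ ^ 2 * ζ ω := by
  obtain ⟨hγ0, hγ2⟩ := hγ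
  letI : MeasurableSpace Ω := m0
  haveI : SigmaFinite (P.trim hm) := inferInstance
  -- B is Lipschitz
  have hBlip : ∀ a b : H, ‖B a - B b‖ ≤ θ⁻¹ * ‖a - b‖ := by
    intro a b
    rcases eq_or_ne (B a - B b) 0 with h | h
    · rw [h, norm_zero]; positivity
    · have h1 := hB a b
      have h2 := real_inner_le_norm (a - b) (B a - B b)
      have h3 : 0 < ‖B a - B b‖ := norm_pos_iff.mpr h
      rw [inv_mul_eq_div, le_div_iff₀ hθ]
      nlinarith
  have hBcont : Continuous B := by
    have : LipschitzWith (Real.toNNReal θ⁻¹) B := by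
      refine LipschitzWith.of_dist_le_mul fun a b => ?_
      rw [dist_eq_norm, dist_eq_norm, Real.coe_toNNReal _ (inv_nonneg.mpr hθ.le)]
      exact hBlip a b
    exact this.continuous
  -- measurability
  have hxm0 : Measurable[m0] x := hx_meas.mono hm le_rfl
  have hBxm : Measurable[m] fun ω => B (x ω) - B z :=
    (hBcont.measurable.comp hx_meas).sub measurable_const
  have hv'm : Measurable[m] fun ω => x ω - z - γ • (B (x ω) - B z) :=
    (hx_meas.sub measurable_const).sub (hBxm.const_smul γ)
  -- L² facts
  have hxzL2 : MemLp (fun ω => x ω - z) 2 P :=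
    (hxL2.sub (memLp_const z)).ae_eq (Eventually.of_forall fun _ => rfl)
  have hBxL2 : MemLp (fun ω => B (x ω) - B z) 2 P := by
    have hBxm0 : Measurable[m0] fun ω => B (x ω) - B z := hBxm.mono hm le_rfl
    refine MemLp.of_le_mul (c := θ⁻¹) hxzL2
      hBxm0.stronglyMeasurable.aestronglyMeasurable ?_
    exact Eventually.of_forall fun ω => hBlip (x ω) z
  have hv'L2 : MemLp (fun ω => x ω - z - γ • (B (x ω) - B z)) 2 P :=
    (hxzL2.sub (hBxL2.const_smul γ)).ae_eq (Eventually.of_forall fun _ => rfl)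
  have huInt : Integrable u P := huL2.integrable one_le_two
  -- the conditional expectation of u agrees with condExpL2
  set U : Lp H 2 P := huL2.toLp u with hUdef
  set Glp := condExpL2 H ℝ hm U with hGdef
  have hGmeas : AEStronglyMeasurable[m] (↑↑Glp : Ω → H) P := aestronglyMeasurable_condExpL2 hm U
  have hGae : (↑↑Glp : Ω → H) =ᵐ[P] P[u|m] := by
    refine ae_eq_condExp_of_forall_setIntegral_eq hm huInt
      (fun s hs hμs => integrableOn_condExpL2_of_measure_ne_top hm hμs.ne U)
      (fun s hs hμs => ?_) hGmeas
    rw [integral_condExpL2_eq hm U hs hμs.ne]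
    exact integral_congr_ae (ae_restrict_of_ae (MemLp.coeFn_toLp huL2))
  have hgL2 : MemLp (P[u|m] : Ω → H) 2 P := (Lp.memLp (↑Glp : Lp H 2 P)).ae_eq hGae
  have hwL2 : MemLp (fun ω => u ω - (P[u|m]) ω) 2 P :=
    (huL2.sub hgL2).ae_eq (Eventually.of_forall fun _ => rfl)
  set W : Lp H 2 P := U - ↑Glp with hWdef
  have hWae : (↑W : Ω → H) =ᵐ[P] fun ω => u ω - (P[u|m]) ω := by
    filter_upwards [Lp.coeFn_sub U (↑Glp : Lp H 2 P), MemLp.coeFn_toLp huL2, hGae] with ω h1 h2 h3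
    rw [hWdef, h1, Pi.sub_apply, h2, h3]
  have hprojG : condExpL2 H ℝ hm ↑Glp = Glp := by
    rw [condExpL2]
    haveI : Fact (m ≤ m0) := ⟨hm⟩
    exact Submodule.orthogonalProjection_mem_subspace_eq_self Glp
  have hWproj : condExpL2 H ℝ hm W = 0 := by
    rw [hWdef, map_sub, hprojG, ← hGdef, sub_self]
  -- integrability of the cross term
  have hcrossInt : Integrable
      (fun ω => ⟪x ω - z - γ • (B (x ω) - B z), u ω - (P[u|m]) ω⟫) P := by
    have h := L2.integrable_inner (𝕜 := ℝ) (hv'L2.toLp _) (hwL2.toLp _)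
    refine h.congr ?_
    filter_upwards [hv'L2.coeFn_toLp, hwL2.coeFn_toLp] with ω h1 h2
    rw [h1, h2]
  -- the cross term has zero conditional expectation
  have hcross0 : (P[fun ω => ⟪x ω - z - γ • (B (x ω) - B z), u ω - (P[u|m]) ω⟫ | m])
      =ᵐ[P] fun _ => (0:ℝ) := by
    have hcross_set : ∀ s : Set Ω, MeasurableSet[m] s →
        ∫ ω in s, ⟪x ω - z - γ • (B (x ω) - B z), u ω - (P[u|m]) ω⟫ ∂P = 0 := by
      intro s hs
      have hVsL2 : MemLp (s.indicator fun ω => x ω - z - γ • (B (x ω) - B z)) 2 P :=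
        hv'L2.indicator (hm s hs)
      set Vs : Lp H 2 P := hVsL2.toLp _ with hVsdef
      have hVs' : AEStronglyMeasurable[m] (↑↑Vs : Ω → H) P :=
        ⟨s.indicator fun ω => x ω - z - γ • (B (x ω) - B z),
          (hv'm.stronglyMeasurable).indicator hs, hVsL2.coeFn_toLp⟩
      have hinnerWVs : (inner ℝ W Vs : ℝ) = 0 := by
        have h1 := inner_condExpL2_eq_inner_fun (𝕜 := ℝ) hm W Vs hVs'
        rw [hWproj] at h1
        rw [← h1]
        simp
      calc ∫ ω in s, ⟪x ω - z - γ • (B (x ω) - B z), u ω - (P[u|m]) ω⟫ ∂P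
          = ∫ ω, (s.indicator
              fun ω => ⟪x ω - z - γ • (B (x ω) - B z), u ω - (P[u|m]) ω⟫) ω ∂P := by
            rw [integral_indicator (hm s hs)]
        _ = ∫ ω, ⟪(s.indicator fun ω => x ω - z - γ • (B (x ω) - B z)) ω,
              u ω - (P[u|m]) ω⟫ ∂P := by
            congr 1
            funext ω
            by_cases hω : ω ∈ s
            · simp [Set.indicator_of_mem hω]
            · simp [Set.indicator_of_notMem hω]
        _ = ∫ ω, ⟪(↑↑Vs : Ω → H) ω, (↑↑W : Ω → H) ω⟫ ∂P := by
            refine integral_congr_ae ?_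
            filter_upwards [hVsL2.coeFn_toLp, hWae] with ω h1 h2
            rw [h1, h2]
        _ = (inner ℝ Vs W : ℝ) := (L2.inner_def Vs W).symm
        _ = 0 := by rw [real_inner_comm]; exact hinnerWVs
    refine (ae_eq_condExp_of_forall_setIntegral_eq hm hcrossInt
      (fun s hs hμs => (integrable_zero _ _ _).integrableOn)
      (fun s hs hμs => by rw [hcross_set s hs]; simp)
      (StronglyMeasurable.aestronglyMeasurable (@stronglyMeasurable_const _ _ m _ _))).symm
  -- integrability of the squared norms
  have hnv'Int : Integrable (fun ω => ‖x ω - z - γ • (B (x ω) - B z)‖ ^ 2) P :=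
    (memLp_two_iff_integrable_sq_norm hv'L2.1).mp hv'L2
  have hnwInt : Integrable (fun ω => ‖u ω - (P[u|m]) ω‖ ^ 2) P :=
    (memLp_two_iff_integrable_sq_norm hwL2.1).mp hwL2
  have hnv'condexp : P[fun ω => ‖x ω - z - γ • (B (x ω) - B z)‖ ^ 2 | m]
      = fun ω => ‖x ω - z - γ • (B (x ω) - B z)‖ ^ 2 :=
    condExp_of_stronglyMeasurable hm
      (by letI : MeasurableSpace Ω := m; exact (hv'm.norm.pow_const 2).stronglyMeasurable)
      hnv'Int
  -- rewrite the integrand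
  have hgoalfun : (fun ω' => ‖x ω' - z - γ • ((u ω' - (P[u|m]) ω' + B (x ω')) - B z)‖ ^ 2)
      = (fun ω => ‖x ω - z - γ • (B (x ω) - B z)‖ ^ 2)
        - (2 * γ) • (fun ω => ⟪x ω - z - γ • (B (x ω) - B z), u ω - (P[u|m]) ω⟫)
        + (γ ^ 2) • (fun ω => ‖u ω - (P[u|m]) ω‖ ^ 2) := by
    funext ω
    simp only [Pi.add_apply, Pi.sub_apply, Pi.smul_apply, smul_eq_mul]
    have harg : x ω - z - γ • ((u ω - (P[u|m]) ω + B (x ω)) - B z)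
        = (x ω - z - γ • (B (x ω) - B z)) - γ • (u ω - (P[u|m]) ω) := by
      module
    rw [harg, norm_sub_sq_real, real_inner_smul_right, norm_smul, Real.norm_eq_abs,
      mul_pow, sq_abs]
    ring
  rw [hgoalfun]
  have e1 := condExp_add (m := m) (μ := P)
    (hnv'Int.sub (hcrossInt.smul (2 * γ))) (hnwInt.smul (γ ^ 2))
  have e2 := condExp_sub (m := m) (μ := P) hnv'Int (hcrossInt.smul (2 * γ))
  have e3 := condExp_smul (m := m) (μ := P) (2 * γ)
    (fun ω => ⟪x ω - z - γ • (B (x ω) - B z), u ω - (P[u|m]) ω⟫)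
  have e4 := condExp_smul (m := m) (μ := P) (γ ^ 2) (fun ω => ‖u ω - (P[u|m]) ω‖ ^ 2)
  filter_upwards [e1, e2, e3, e4, hcross0, hvar] with ω h1 h2 h3 h4 h5 h6
  rw [h1, Pi.add_apply, h2, Pi.sub_apply, h3, h4, hnv'condexp]
  simp only [Pi.smul_apply, smul_eq_mul, h5]
  have hv'bound : ‖x ω - z - γ • (B (x ω) - B z)‖ ^ 2
      ≤ ‖x ω - z‖ ^ 2 - 2 * γ * θ * ‖B (x ω) - B z‖ ^ 2 + γ ^ 2 * ‖B (x ω) - B z‖ ^ 2 := by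
    rw [norm_sub_sq_real, real_inner_smul_right, norm_smul, Real.norm_eq_abs, mul_pow, sq_abs]
    nlinarith [hB (x ω) z]
  have hmul : γ ^ 2 * (P[fun ω' => ‖u ω' - (P[u|m]) ω'‖ ^ 2|m]) ω
      ≤ γ ^ 2 * (τ * ‖B (x ω) - B z‖ ^ 2 + ζ ω) :=
    mul_le_mul_of_nonneg_left h6 (sq_nonneg γ)
  nlinarith [hmul, hv'bound]
end

section
/- Let H be a real Hilbert space, let θ ∈ (0,∞), let B : H → H be θ-cocoercive, let γ ∈ (0,2θ], let J : H → H be firmly nonexpansive, and set T = J ∘ (Id − γB). Let z ∈ H satisfy Tz = z. Then for every x ∈ H, ‖Bx − Bz‖² ≤ (1/(γθ))(1 + γ/θ) ‖x − z‖ · ‖Tx − x‖. -/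
open scoped RealInnerProductSpace

/-- **Quantitative bound on the cocoercive-operator gap via the
forward-backward residual.** For a θ-cocoercive B, γ ∈ (0,2θ], a firmly
nonexpansive J, T = J ∘ (Id − γB) and a fixed point z of T, one has
‖Bx − Bz‖² ≤ (1/(γθ))(1 + γ/θ)‖x − z‖·‖Tx − x‖ for every x. -/
theorem cocoercive_gap_bound
    {H : Type*} [NormedAddCommGroup H] [InnerProductSpace ℝ H]
    (θ : ℝ) (hθ : 0 < θ)
    (B : H → H) (hB : ∀ x y : H, θ * ‖B x - B y‖ ^ 2 ≤ ⟪x - y, B x - B y⟫)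
    (γ : ℝ) (hγ : γ ∈ Set.Ioc 0 (2 * θ))
    (J : H → H)
    (hJ : ∀ x y : H, 0 ≤ ⟪J x - J y, (x - J x) - (y - J y)⟫)
    (z : H) (hz : J (z - γ • B z) = z) :
    ∀ x : H, ‖B x - B z‖ ^ 2
      ≤ (1 / (γ * θ)) * (1 + γ / θ) * (‖x - z‖ * ‖J (x - γ • B x) - x‖) := by
  intro x
  obtain ⟨hγ0, hγ2⟩ := hγ
  set b := B x - B z with hb
  set u := x - γ • B x with hu
  set v := z - γ • B z with hv
  set w := J u with hw
  have hcoco : θ * ‖b‖ ^ 2 ≤ ⟪x - z, b⟫ := hB x z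
  have hCS : ⟪x - z, b⟫ ≤ ‖x - z‖ * ‖b‖ := real_inner_le_norm _ _
  have hbn : θ * ‖b‖ ≤ ‖x - z‖ := by
    rcases eq_or_lt_of_le (norm_nonneg b) with h | h
    · rw [← h, mul_zero]; exact norm_nonneg _
    · nlinarith
  have huv : u - v = (x - z) - γ • b := by
    simp only [hu, hv, hb, smul_sub]; abel
  have hne1 : ‖u - v‖ ^ 2 ≤ ‖x - z‖ ^ 2 := by
    rw [huv, norm_sub_sq_real, real_inner_smul_right, norm_smul,
      Real.norm_eq_abs, abs_of_pos hγ0]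
    have e1 : γ * (θ * ‖b‖ ^ 2) ≤ γ * ⟪x - z, b⟫ :=
      mul_le_mul_of_nonneg_left hcoco hγ0.le
    have e2 : 0 ≤ (2 * θ - γ) * (γ * ‖b‖ ^ 2) :=
      mul_nonneg (by linarith) (mul_nonneg hγ0.le (sq_nonneg _))
    nlinarith [sq_nonneg ‖b‖]
  have huvn : ‖u - v‖ ≤ ‖x - z‖ := by
    nlinarith [hne1, norm_nonneg (u - v), norm_nonneg (x - z)]
  -- firm nonexpansiveness at u, v
  have hfirm : 0 ≤ ⟪w - z, (u - w) - (v - z)⟫ := by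
    have := hJ u v
    rwa [hz, ← hw] at this
  -- nonexpansiveness of J: ‖w - z‖ ≤ ‖x - z‖
  have hwz2 : ‖w - z‖ ^ 2 ≤ ⟪w - z, u - v⟫ := by
    have : (u - w) - (v - z) = (u - v) - (w - z) := by abel
    rw [this, inner_sub_right, real_inner_self_eq_norm_sq] at hfirm
    linarith
  have hwzn : ‖w - z‖ ≤ ‖x - z‖ := by
    rcases eq_or_lt_of_le (norm_nonneg (w - z)) with h | h
    · rw [← h]; exact norm_nonneg _
    · have h1 : ⟪w - z, u - v⟫ ≤ ‖w - z‖ * ‖u - v‖ := real_inner_le_norm _ _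
      nlinarith
  -- key inequality from firm nonexpansiveness
  have hkey : γ * ⟪w - z, b⟫ ≤ ⟪w - z, x - w⟫ := by
    have heq : (u - w) - (v - z) = (x - w) - γ • b := by
      simp only [hu, hv, hb, smul_sub]; abel
    rw [heq, inner_sub_right, real_inner_smul_right] at hfirm
    linarith
  have hsplit : ⟪x - z, b⟫ = ⟪x - w, b⟫ + ⟪w - z, b⟫ := by
    rw [← inner_add_left]; congr 1; abel
  have h1 : ⟪x - w, b⟫ ≤ ‖x - w‖ * ‖b‖ := real_inner_le_norm _ _
  have h2 : ⟪w - z, x - w⟫ ≤ ‖w - z‖ * ‖x - w‖ := real_inner_le_norm _ _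
  have hR : (0:ℝ) ≤ ‖x - z‖ * ‖x - w‖ := by positivity
  have hxw : ‖x - w‖ = ‖w - x‖ := norm_sub_rev _ _
  -- main algebraic combination
  have a1 : θ * ⟪x - w, b⟫ ≤ ‖x - z‖ * ‖x - w‖ := by
    have t1 : θ * ⟪x - w, b⟫ ≤ θ * (‖x - w‖ * ‖b‖) :=
      mul_le_mul_of_nonneg_left h1 hθ.le
    have t2 : ‖x - w‖ * (θ * ‖b‖) ≤ ‖x - w‖ * ‖x - z‖ :=
      mul_le_mul_of_nonneg_left hbn (norm_nonneg (x - w))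
    linarith
  have a2 : γ * (θ * ⟪w - z, b⟫) ≤ θ * (‖x - z‖ * ‖x - w‖) := by
    have t3 : θ * (γ * ⟪w - z, b⟫) ≤ θ * ⟪w - z, x - w⟫ :=
      mul_le_mul_of_nonneg_left hkey hθ.le
    have t4 : θ * ⟪w - z, x - w⟫ ≤ θ * (‖w - z‖ * ‖x - w‖) :=
      mul_le_mul_of_nonneg_left h2 hθ.le
    have t5 : θ * (‖x - w‖ * ‖w - z‖) ≤ θ * (‖x - w‖ * ‖x - z‖) :=
      mul_le_mul_of_nonneg_left
        (mul_le_mul_of_nonneg_left hwzn (norm_nonneg (x - w))) hθ.le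
    linarith
  have c1 : θ ^ 2 * ‖b‖ ^ 2 ≤ θ * ⟪x - z, b⟫ := by
    have := mul_le_mul_of_nonneg_left hcoco hθ.le
    linarith
  have hmain : γ * θ ^ 2 * ‖b‖ ^ 2 ≤ (θ + γ) * (‖x - z‖ * ‖x - w‖) := by
    have m1 : γ * (θ ^ 2 * ‖b‖ ^ 2) ≤ γ * (θ * ⟪x - z, b⟫) :=
      mul_le_mul_of_nonneg_left c1 hγ0.le
    have m2 : γ * (θ * ⟪x - z, b⟫)
        = γ * (θ * ⟪x - w, b⟫) + γ * (θ * ⟪w - z, b⟫) := by rw [hsplit]; ring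
    have m3 : γ * (θ * ⟪x - w, b⟫) ≤ γ * (‖x - z‖ * ‖x - w‖) :=
      mul_le_mul_of_nonneg_left a1 hγ0.le
    linarith
  have hc : (1 / (γ * θ)) * (1 + γ / θ) = (θ + γ) / (γ * θ ^ 2) := by
    field_simp
  have hrw : (1 / (γ * θ)) * (1 + γ / θ) * (‖x - z‖ * ‖w - x‖)
      = ((θ + γ) * (‖x - z‖ * ‖x - w‖)) / (γ * θ ^ 2) := by
    rw [← hxw, hc]; ring
  rw [hrw, le_div_iff₀ (by positivity)]
  linarith
end

section
/- Let H be a real Hilbert space, let θ ∈ (0,∞), let B : H → H be θ-cocoercive, let γ ∈ (0,2θ], let J : H → H be nonexpansive, and set T = J ∘ (Id − γB). Let λ ∈ (0,1], let x, u, a ∈ H, and set x⁺ = x + λ(J(x − γu) + a − x). Then ‖Tx⁺ − x⁺‖ ≤ ‖Tx − x‖ + 2λ(γ‖u − Bx‖ + ‖a‖). -/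
open scoped RealInnerProductSpace

/-- **One-step control of the fixed-point residual of T = J ∘ (Id − γB) along
the stochastic forward-backward update.** -/
theorem residual_one_step_bound
    {H : Type*} [NormedAddCommGroup H] [InnerProductSpace ℝ H]
    (θ : ℝ) (hθ : 0 < θ)
    (B : H → H) (hB : ∀ x y : H, θ * ‖B x - B y‖ ^ 2 ≤ ⟪x - y, B x - B y⟫)
    (γ : ℝ) (hγ : γ ∈ Set.Ioc 0 (2 * θ))
    (J : H → H) (hJ : ∀ x y : H, ‖J x - J y‖ ≤ ‖x - y‖)
    (lam : ℝ) (hlam : lam ∈ Set.Ioc (0 : ℝ) 1)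
    (x u a x' : H) (hx' : x' = x + lam • (J (x - γ • u) + a - x)) :
    ‖J (x' - γ • B x') - x'‖
      ≤ ‖J (x - γ • B x) - x‖ + 2 * lam * (γ * ‖u - B x‖ + ‖a‖) := by
  obtain ⟨hγ0, hγ2⟩ := hγ
  obtain ⟨hl0, hl1⟩ := hlam
  -- Id - γB is nonexpansive
  have hne : ∀ p q : H, ‖(p - γ • B p) - (q - γ • B q)‖ ≤ ‖p - q‖ := by
    intro p q
    have h2 : (p - γ • B p) - (q - γ • B q) = (p - q) - γ • (B p - B q) := by
      rw [smul_sub]; abel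
    have h1 : ‖(p - γ • B p) - (q - γ • B q)‖ ^ 2 ≤ ‖p - q‖ ^ 2 := by
      rw [h2, norm_sub_sq_real, real_inner_smul_right, norm_smul,
        Real.norm_eq_abs, abs_of_pos hγ0]
      nlinarith [mul_le_mul_of_nonneg_left (hB p q) hγ0.le,
        mul_nonneg (mul_nonneg hγ0.le (sub_nonneg.2 hγ2)) (sq_nonneg ‖B p - B q‖)]
    have := Real.sqrt_le_sqrt h1
    rwa [Real.sqrt_sq (norm_nonneg _), Real.sqrt_sq (norm_nonneg _)] at this
  set e : H := J (x - γ • u) - J (x - γ • B x) + a with he_def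
  have he : ‖e‖ ≤ γ * ‖u - B x‖ + ‖a‖ := by
    calc ‖e‖ ≤ ‖J (x - γ • u) - J (x - γ • B x)‖ + ‖a‖ := norm_add_le _ _
      _ ≤ ‖(x - γ • u) - (x - γ • B x)‖ + ‖a‖ := by
          linarith [hJ (x - γ • u) (x - γ • B x)]
      _ = γ * ‖u - B x‖ + ‖a‖ := by
          congr 1
          have : (x - γ • u) - (x - γ • B x) = -(γ • (u - B x)) := by
            rw [smul_sub]; abel
          rw [this, norm_neg, norm_smul, Real.norm_eq_abs, abs_of_pos hγ0]
  have hxx : x' - x = lam • (J (x - γ • B x) - x) + lam • e := by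
    rw [hx', he_def]
    module
  have hTx : J (x - γ • B x) - x' = (1 - lam) • (J (x - γ • B x) - x) - lam • e := by
    rw [hx', he_def]
    module
  have h3 : ‖x' - x‖ ≤ lam * ‖J (x - γ • B x) - x‖ + lam * ‖e‖ := by
    rw [hxx]
    calc ‖lam • (J (x - γ • B x) - x) + lam • e‖
        ≤ ‖lam • (J (x - γ • B x) - x)‖ + ‖lam • e‖ := norm_add_le _ _
      _ = lam * ‖J (x - γ • B x) - x‖ + lam * ‖e‖ := by
          rw [norm_smul, norm_smul, Real.norm_eq_abs, abs_of_pos hl0]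
  have h4 : ‖J (x - γ • B x) - x'‖
      ≤ (1 - lam) * ‖J (x - γ • B x) - x‖ + lam * ‖e‖ := by
    rw [hTx]
    calc ‖(1 - lam) • (J (x - γ • B x) - x) - lam • e‖
        ≤ ‖(1 - lam) • (J (x - γ • B x) - x)‖ + ‖lam • e‖ := norm_sub_le _ _
      _ = (1 - lam) * ‖J (x - γ • B x) - x‖ + lam * ‖e‖ := by
          rw [norm_smul, norm_smul, Real.norm_eq_abs, Real.norm_eq_abs,
            abs_of_nonneg (by linarith : (0:ℝ) ≤ 1 - lam), abs_of_pos hl0]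
  have h5 : ‖J (x' - γ • B x') - x'‖
      ≤ ‖J (x' - γ • B x') - J (x - γ • B x)‖ + ‖J (x - γ • B x) - x'‖ :=
    norm_sub_le_norm_sub_add_norm_sub _ _ _
  have h6 : ‖J (x' - γ • B x') - J (x - γ • B x)‖ ≤ ‖x' - x‖ :=
    le_trans (hJ _ _) (hne x' x)
  have h7 : 2 * lam * ‖e‖ ≤ 2 * lam * (γ * ‖u - B x‖ + ‖a‖) :=
    mul_le_mul_of_nonneg_left he (by linarith)
  linarith
end

section
/- Let H be a separable real Hilbert space, let θ ∈ (0,∞), let B : H → H be θ-cocoercive, let γ ∈ (0,2θ], and let J : H → H be nonexpansive. Let (Ω,F,P) be a probability space, let X be a sub-σ-algebra of F, let x be an X-measurable random variable in L²(Ω,F,P;H), let u ∈ L²(Ω,F,P;H), set r = x − γu and R = Id − γB, and let z ∈ H. Then, P-almost surely, ‖x − γBx − J(x − γBx) + γBz‖² ≤ 3 ( E[‖r − Jr − Rz + z‖² | X] + 8θ² E[‖u − Bx‖² | X] ). -/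
open MeasureTheory
open scoped RealInnerProductSpace

/-- **Almost sure bound on the deterministic forward-backward residual by
conditional second moments of the stochastic residuals.** Here r = x − γu and
R = Id − γB, so that R z = z − γ • B z. -/
theorem residual_conditional_bound
    {Ω : Type*} {m0 : MeasurableSpace Ω} {P : Measure Ω} [IsProbabilityMeasure P]
    {H : Type*} [NormedAddCommGroup H] [InnerProductSpace ℝ H] [CompleteSpace H]
    [SecondCountableTopology H] [MeasurableSpace H] [BorelSpace H]
    (θ : ℝ) (hθ : 0 < θ)
    (B : H → H) (hB : ∀ x y : H, θ * ‖B x - B y‖ ^ 2 ≤ ⟪x - y, B x - B y⟫)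
    (γ : ℝ) (hγ : γ ∈ Set.Ioc 0 (2 * θ))
    (J : H → H) (hJ : ∀ x y : H, ‖J x - J y‖ ≤ ‖x - y‖)
    (m : MeasurableSpace Ω) (hm : m ≤ m0)
    (x : Ω → H) (hx_meas : Measurable[m] x) (hxL2 : MemLp x 2 P)
    (u : Ω → H) (huL2 : MemLp u 2 P) (z : H) :
    ∀ᵐ ω ∂P,
      ‖x ω - γ • B (x ω) - J (x ω - γ • B (x ω)) + γ • B z‖ ^ 2
        ≤ 3 * ((P[fun ω' =>
              ‖(x ω' - γ • u ω') - J (x ω' - γ • u ω')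
                - (z - γ • B z) + z‖ ^ 2 | m]) ω
            + 8 * θ ^ 2 * (P[fun ω' => ‖u ω' - B (x ω')‖ ^ 2 | m]) ω) := by
  obtain ⟨hγ0, hγ2θ⟩ := hγ
  -- B is θ⁻¹-Lipschitz
  have hBlip : ∀ a b : H, ‖B a - B b‖ ≤ θ⁻¹ * ‖a - b‖ := by
    intro a b
    rcases eq_or_ne (B a) (B b) with h | h
    · simp [h]
      positivity
    · have hn : 0 < ‖B a - B b‖ := by
        rw [norm_pos_iff]; exact sub_ne_zero.mpr h
      have h2 : ⟪a - b, B a - B b⟫ ≤ ‖a - b‖ * ‖B a - B b‖ := real_inner_le_norm _ _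
      have h1 := hB a b
      have key : θ * ‖B a - B b‖ ≤ ‖a - b‖ := by nlinarith
      calc ‖B a - B b‖ = θ⁻¹ * (θ * ‖B a - B b‖) := by field_simp
        _ ≤ θ⁻¹ * ‖a - b‖ := by
            exact mul_le_mul_of_nonneg_left key (by positivity)
  have hBc : Continuous B := by
    refine (LipschitzWith.of_dist_le_mul (K := Real.toNNReal θ⁻¹) fun a b => ?_).continuous
    rw [dist_eq_norm, dist_eq_norm, Real.coe_toNNReal _ (by positivity)]
    exact hBlip a b
  have hJc : Continuous J := by
    refine (LipschitzWith.of_dist_le_mul (K := 1) fun a b => ?_).continuous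
    rw [dist_eq_norm, dist_eq_norm, NNReal.coe_one, one_mul]
    exact hJ a b
  -- Memℒp of compositions
  have hJcomp : ∀ (v : Ω → H), MemLp v 2 P → MemLp (fun ω => J (v ω)) 2 P := by
    intro v hv
    have hg : MemLp (fun ω => ‖J 0‖ + ‖v ω‖) 2 P := (memLp_const (μ := P) (p := 2) ‖J 0‖).add hv.norm
    refine MemLp.of_le hg
      (hJc.comp_aestronglyMeasurable hv.aestronglyMeasurable)
      (Filter.Eventually.of_forall fun ω => ?_)
    have h1 : ‖J (v ω)‖ ≤ ‖J 0‖ + ‖v ω‖ := by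
      calc ‖J (v ω)‖ = ‖(J (v ω) - J 0) + J 0‖ := by rw [sub_add_cancel]
        _ ≤ ‖J (v ω) - J 0‖ + ‖J 0‖ := norm_add_le _ _
        _ ≤ ‖v ω - 0‖ + ‖J 0‖ := by linarith [hJ (v ω) 0]
        _ = ‖J 0‖ + ‖v ω‖ := by rw [sub_zero]; ring
    exact h1.trans (le_abs_self _)
  have hBx : MemLp (fun ω => B (x ω)) 2 P := by
    have hxm0 : AEStronglyMeasurable[m0] x P := hxL2.aestronglyMeasurable
    have hg : MemLp (fun ω => ‖B 0‖ + θ⁻¹ * ‖x ω‖) 2 P :=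
      (memLp_const (μ := P) (p := 2) ‖B 0‖).add (hxL2.norm.const_mul θ⁻¹)
    refine MemLp.of_le hg
      (hBc.comp_aestronglyMeasurable hxm0)
      (Filter.Eventually.of_forall fun ω => ?_)
    have h1 : ‖B (x ω)‖ ≤ ‖B 0‖ + θ⁻¹ * ‖x ω‖ := by
      calc ‖B (x ω)‖ = ‖(B (x ω) - B 0) + B 0‖ := by rw [sub_add_cancel]
        _ ≤ ‖B (x ω) - B 0‖ + ‖B 0‖ := norm_add_le _ _
        _ ≤ θ⁻¹ * ‖x ω - 0‖ + ‖B 0‖ := by linarith [hBlip (x ω) 0]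
        _ = ‖B 0‖ + θ⁻¹ * ‖x ω‖ := by rw [sub_zero]; ring
    exact h1.trans (le_abs_self _)
  -- abbreviations
  set s2 : Ω → ℝ := fun ω' =>
      ‖(x ω' - γ • u ω') - J (x ω' - γ • u ω') - (z - γ • B z) + z‖ ^ 2 with hs2_def
  set t2 : Ω → ℝ := fun ω' => ‖u ω' - B (x ω')‖ ^ 2 with ht2_def
  set F : Ω → ℝ := fun ω =>
      ‖x ω - γ • B (x ω) - J (x ω - γ • B (x ω)) + γ • B z‖ ^ 2 with hF_def
  -- integrability
  have hr : MemLp (fun ω => x ω - γ • u ω) 2 P := hxL2.sub (huL2.const_smul γ)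
  have hv1 : MemLp (fun ω =>
      (x ω - γ • u ω) - J (x ω - γ • u ω) - (z - γ • B z) + z) 2 P :=
    ((hr.sub (hJcomp _ hr)).sub (memLp_const _)).add (memLp_const _)
  have hs2_int : Integrable s2 P := by
    rw [hs2_def]; exact hv1.norm.integrable_sq
  have ht2_int : Integrable t2 P := by
    rw [ht2_def]; exact (huL2.sub hBx).norm.integrable_sq
  have hw : MemLp (fun ω => x ω - γ • B (x ω)) 2 P := hxL2.sub (hBx.const_smul γ)
  have hv0 : MemLp (fun ω =>
      x ω - γ • B (x ω) - J (x ω - γ • B (x ω)) + γ • B z) 2 P :=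
    (hw.sub (hJcomp _ hw)).add (memLp_const _)
  have hF_int : Integrable F P := by
    rw [hF_def]; exact hv0.norm.integrable_sq
  -- F is m-measurable
  have hF_sm : StronglyMeasurable[m] F := by
    have hWc : Continuous fun w : H => w - γ • B w :=
      continuous_id.sub (hBc.const_smul γ)
    have hgc : Continuous fun w : H =>
        ‖w - γ • B w - J (w - γ • B w) + γ • B z‖ ^ 2 :=
      (((hWc.sub (hJc.comp hWc)).add continuous_const).norm).pow 2
    have : Measurable[m] F := by
      rw [hF_def]
      exact hgc.measurable.comp hx_meas
    exact this.stronglyMeasurable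
  -- pointwise inequality
  have h_pt : ∀ ω, F ω ≤ ((3 : ℝ) • (s2 + (8 * θ ^ 2 : ℝ) • t2)) ω := by
    intro ω
    simp only [hF_def, hs2_def, ht2_def, Pi.smul_apply, Pi.add_apply, smul_eq_mul]
    set a := x ω - γ • B (x ω) with ha
    set r := x ω - γ • u ω with hrd
    have hre : r - J r - (z - γ • B z) + z = r - J r + γ • B z := by abel
    rw [hre]
    set s := ‖r - J r + γ • B z‖ with hs
    set t := ‖u ω - B (x ω)‖ with ht
    have har : a - r = γ • (u ω - B (x ω)) := by
      rw [ha, hrd, smul_sub]; abel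
    have harn : ‖a - r‖ = γ * t := by
      rw [har, norm_smul, Real.norm_eq_abs, abs_of_pos hγ0, ht]
    have h1 : ‖a - J a + γ • B z‖ ≤ s + (γ * t + γ * t) := by
      have hd : a - J a + γ • B z = (r - J r + γ • B z) + ((a - r) + (J r - J a)) := by
        abel
      rw [hd]
      have h2 : ‖(a - r) + (J r - J a)‖ ≤ γ * t + γ * t := by
        calc ‖(a - r) + (J r - J a)‖ ≤ ‖a - r‖ + ‖J r - J a‖ := norm_add_le _ _
          _ ≤ ‖a - r‖ + ‖r - a‖ := by linarith [hJ r a]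
          _ = γ * t + γ * t := by rw [norm_sub_rev r a, harn]
      calc ‖(r - J r + γ • B z) + ((a - r) + (J r - J a))‖
          ≤ ‖r - J r + γ • B z‖ + ‖(a - r) + (J r - J a)‖ := norm_add_le _ _
        _ ≤ s + (γ * t + γ * t) := by rw [← hs]; linarith
    have h2 : ‖a - J a + γ • B z‖ ^ 2 ≤ (s + (γ * t + γ * t)) ^ 2 :=
      pow_le_pow_left₀ (norm_nonneg _) h1 2
    have hsn : (0:ℝ) ≤ s := norm_nonneg _
    have htn : (0:ℝ) ≤ t := norm_nonneg _
    nlinarith [sq_nonneg (s - 2 * θ * t), mul_nonneg hsn htn,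
      mul_nonneg (mul_nonneg (sub_nonneg.2 hγ2θ) hsn) htn,
      mul_nonneg (sub_nonneg.2 hγ2θ) (mul_nonneg htn htn),
      mul_nonneg (mul_nonneg (sub_nonneg.2 hγ2θ) hγ0.le) (mul_nonneg htn htn)]
  -- conditional expectation manipulations
  have h8_int : Integrable ((8 * θ ^ 2 : ℝ) • t2) P := ht2_int.smul _
  have hg'_int : Integrable (s2 + (8 * θ ^ 2 : ℝ) • t2) P := hs2_int.add h8_int
  have hg_int : Integrable ((3 : ℝ) • (s2 + (8 * θ ^ 2 : ℝ) • t2)) P := hg'_int.smul _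
  have hmono : P[F|m] ≤ᵐ[P] P[(3 : ℝ) • (s2 + (8 * θ ^ 2 : ℝ) • t2)|m] :=
    condExp_mono hF_int hg_int (Filter.Eventually.of_forall h_pt)
  rw [condExp_of_stronglyMeasurable hm hF_sm hF_int] at hmono
  have e1 : P[(3 : ℝ) • (s2 + (8 * θ ^ 2 : ℝ) • t2)|m]
      =ᵐ[P] (3 : ℝ) • P[s2 + (8 * θ ^ 2 : ℝ) • t2|m] := condExp_smul _ _ _
  have e2 : P[s2 + (8 * θ ^ 2 : ℝ) • t2|m]
      =ᵐ[P] P[s2|m] + P[(8 * θ ^ 2 : ℝ) • t2|m] := condExp_add hs2_int h8_int _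
  have e3 : P[(8 * θ ^ 2 : ℝ) • t2|m] =ᵐ[P] (8 * θ ^ 2 : ℝ) • P[t2|m] :=
    condExp_smul _ _ _
  filter_upwards [hmono, e1, e2, e3] with ω h1 h2 h3 h4
  have : F ω ≤ 3 * ((P[s2|m]) ω + 8 * θ ^ 2 * (P[t2|m]) ω) := by
    rw [h2, Pi.smul_apply, h3, Pi.add_apply, h4, Pi.smul_apply,
      smul_eq_mul, smul_eq_mul] at h1
    linarith [h1]
  simpa [hF_def] using this
end
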